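/- arXiv:2510.03109 — 3 statements merged into one kernel-verified Lean document; each statement's English description precedes it below -/
import Mathlib

section
/- Suppose: L_n : Θ → ℝ is measurable, bounded below, lower semicontinuous, and coercive; 𝒬 ⊆ 𝒫(Θ) is convex and closed in the weak* topology; D is lower semicontinuous and strictly convex in its first argument; D(Q,Π) ≤ M for all Q ∈ 𝒬; there exists P_n^⋆ ∈ 𝒬 with J_{L_n}(P_n^⋆) ≤ J_{L_n}(Q) for all Q ∈ 𝒬; and some Q ∈ 𝒬 has T_n(Q) < ∞. Then the functional T_n has a unique minimiser over 𝒬. -/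
open MeasureTheory Filter Topology
open scoped ENNReal NNReal

/-- The loss functional `J_f(ν) := ∫ f dν`, valued in the extended reals; for `f`
bounded below it takes values in `(-∞, ∞]`. -/
noncomputable def J {Θ : Type*} [MeasurableSpace Θ] (f : Θ → ℝ) (ν : Measure Θ) : EReal :=
  ((∫⁻ θ, ENNReal.ofReal (f θ) ∂ν : ℝ≥0∞) : EReal) -
    ((∫⁻ θ, ENNReal.ofReal (-f θ) ∂ν : ℝ≥0∞) : EReal)

/-- The GVI objective `T n β L D Π Q := n · J_L(Q) + (1/β) · D(Q, Π)`. -/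
noncomputable def T {Θ : Type*} [MeasurableSpace Θ] (n : ℕ) (β : ℝ) (L : Θ → ℝ)
    (D : ProbabilityMeasure Θ → ProbabilityMeasure Θ → ℝ)
    (prior Q : ProbabilityMeasure Θ) : EReal :=
  ((n : ℝ) : EReal) * J L (Q : Measure Θ) + ((1 / β * D Q prior : ℝ) : EReal)

/-- `f : Θ → ℝ` is coercive if for every `c` there is a compact set outside of which `f > c`. -/
def Coercive {Θ : Type*} [TopologicalSpace Θ] (f : Θ → ℝ) : Prop :=
  ∀ c : ℝ, ∃ K : Set Θ, IsCompact K ∧ ∀ θ ∉ K, c < f θ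

/-- The mixture `a·μ + (1−a)·ν` of two probability measures. -/
noncomputable def mix {Θ : Type*} [MeasurableSpace Θ] (μ ν : ProbabilityMeasure Θ) (a : ℝ)
    (ha0 : 0 ≤ a) (ha1 : a ≤ 1) : ProbabilityMeasure Θ :=
  ⟨ENNReal.ofReal a • (μ : Measure Θ) + ENNReal.ofReal (1 - a) • (ν : Measure Θ), by
    constructor
    simp only [Measure.coe_add, Pi.add_apply, Measure.smul_apply, smul_eq_mul, measure_univ,
      mul_one]
    rw [← ENNReal.ofReal_add ha0 (by linarith)]
    norm_num⟩

/-- The Dirac probability measure at `θ`. -/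
noncomputable def diracProb {Θ : Type*} [MeasurableSpace Θ] (θ : Θ) : ProbabilityMeasure Θ :=
  ⟨Measure.dirac θ, inferInstance⟩

/-- `𝒬` allows for Dirac measures: it is weak*-closed and the infimum of `J_f` over `𝒬`
equals the infimum of `f` over `Θ`, for every bounded below, lsc, coercive `f`. -/
def AllowsDiracs {Θ : Type*} [MeasurableSpace Θ] [TopologicalSpace Θ] [OpensMeasurableSpace Θ]
    (𝒬 : Set (ProbabilityMeasure Θ)) : Prop :=
  IsClosed 𝒬 ∧ ∀ f : Θ → ℝ, (∃ b, ∀ θ, b ≤ f θ) → LowerSemicontinuous f → Coercive f →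
    (⨅ ν : 𝒬, J f (ν.1 : Measure Θ)) = ((⨅ θ, f θ : ℝ) : EReal)

section Aux
open Set Metric Filter Topology MeasureTheory

variable {Θ : Type*}

/-- finite unions of closed balls with centers in a countable dense set, rational radii -/
def ABalls [PseudoMetricSpace Θ] (x : ℕ → Θ) (S : Finset (ℕ × ℚ)) : Set Θ :=
  ⋃ p ∈ S, Metric.closedBall (x p.1) (p.2 : ℝ)

lemma ABalls_union [PseudoMetricSpace Θ] (x : ℕ → Θ) (S T : Finset (ℕ × ℚ)) :
    ABalls x (S ∪ T) = ABalls x S ∪ ABalls x T := by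
  ext z
  simp only [ABalls, Finset.mem_union, Set.mem_iUnion, Set.mem_union]
  constructor
  · rintro ⟨p, hp | hp, hz⟩
    · exact Or.inl ⟨p, hp, hz⟩
    · exact Or.inr ⟨p, hp, hz⟩
  · rintro (⟨p, hp, hz⟩ | ⟨p, hp, hz⟩)
    · exact ⟨p, Or.inl hp, hz⟩
    · exact ⟨p, Or.inr hp, hz⟩

lemma isClosed_ABalls [PseudoMetricSpace Θ] (x : ℕ → Θ) (S : Finset (ℕ × ℚ)) :
    IsClosed (ABalls x S) := by
  apply Set.Finite.isClosed_biUnion (Finset.finite_toSet S)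
  intro p _
  exact Metric.isClosed_closedBall

lemma measurableSet_ABalls [PseudoMetricSpace Θ] [MeasurableSpace Θ] [OpensMeasurableSpace Θ]
    (x : ℕ → Θ) (S : Finset (ℕ × ℚ)) : MeasurableSet (ABalls x S) :=
  (isClosed_ABalls x S).measurableSet

/-- Covering lemma: every compact inside an open set can be sandwiched
`K ⊆ interior (ABalls x S) ⊆ ABalls x S ⊆ G`. -/
lemma exists_ABalls_between [MetricSpace Θ] {x : ℕ → Θ} (hx : DenseRange x)
    {K G : Set Θ} (hK : IsCompact K) (hG : IsOpen G) (hKG : K ⊆ G) :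
    ∃ S : Finset (ℕ × ℚ), K ⊆ interior (ABalls x S) ∧ ABalls x S ⊆ G := by
  -- for each y ∈ K choose a good pair
  have key : ∀ y ∈ K, ∃ p : ℕ × ℚ, y ∈ Metric.ball (x p.1) (p.2 : ℝ) ∧
      Metric.closedBall (x p.1) (p.2 : ℝ) ⊆ G := by
    intro y hy
    obtain ⟨ε, hε, hball⟩ := Metric.isOpen_iff.mp hG y (hKG hy)
    obtain ⟨q, hq0, hq⟩ := exists_rat_btwn (show (0:ℝ) < ε/4 by linarith)
    obtain ⟨i, hi⟩ := Metric.denseRange_iff.mp hx y (q : ℝ)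
      (by exact_mod_cast hq0)
    refine ⟨(i, q), ?_, ?_⟩
    · simpa [Metric.mem_ball, dist_comm] using hi
    · intro z hz
      apply hball
      have : dist z y ≤ dist z (x i) + dist (x i) y := dist_triangle _ _ _
      have h1 : dist z (x i) ≤ (q:ℝ) := hz
      have h2 : dist (x i) y < (q:ℝ) := by rwa [dist_comm] at hi
      have : dist z y < ε := by
        have : dist z y ≤ (q:ℝ) + (q:ℝ) := by linarith
        linarith
      exact this
  -- index type: good pairs
  classical
  let σ := {p : ℕ × ℚ // Metric.closedBall (x p.1) (p.2 : ℝ) ⊆ G}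
  have cover : K ⊆ ⋃ s : σ, Metric.ball (x s.1.1) ((s.1.2 : ℝ)) := by
    intro y hy
    obtain ⟨p, hp1, hp2⟩ := key y hy
    exact Set.mem_iUnion.mpr ⟨⟨p, hp2⟩, hp1⟩
  obtain ⟨t, ht⟩ := hK.elim_finite_subcover (fun s : σ => Metric.ball (x s.1.1) ((s.1.2 : ℝ)))
    (fun s => Metric.isOpen_ball) cover
  refine ⟨t.image (fun s => s.1), ?_, ?_⟩
  · -- K ⊆ interior
    intro y hy
    obtain ⟨s, hs, hys⟩ := Set.mem_iUnion₂.mp (ht hy)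
    have hsub : Metric.ball (x s.1.1) ((s.1.2 : ℝ)) ⊆ ABalls x (t.image (fun s => s.1)) := by
      refine Metric.ball_subset_closedBall.trans ?_
      intro z hz
      exact Set.mem_biUnion (Finset.mem_image_of_mem _ hs) hz
    exact interior_maximal hsub Metric.isOpen_ball hys
  · -- union ⊆ G
    intro z hz
    obtain ⟨p, hp, hzp⟩ := Set.mem_iUnion₂.mp hz
    obtain ⟨s, hs, rfl⟩ := Finset.mem_image.mp hp
    exact s.2 hzp


lemma ennreal_coe_ereal_eq (A : ℝ≥0∞) (h : A ≠ ⊤) : ((A : EReal)) = ((A.toReal : ℝ) : EReal) := by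
  rw [← ENNReal.ofReal_toReal h, EReal.coe_ennreal_ofReal,
    max_eq_left ENNReal.toReal_nonneg, ENNReal.toReal_ofReal ENNReal.toReal_nonneg]

lemma ofReal_shift_pt {x y : ℝ} (h : y ≤ x) :
    ENNReal.ofReal (x - y) + ENNReal.ofReal (-x) + ENNReal.ofReal y
      = ENNReal.ofReal x + ENNReal.ofReal (-y) := by
  rcases le_or_gt 0 x with hx | hx <;> rcases le_or_gt 0 y with hy | hy
  · rw [ENNReal.ofReal_of_nonpos (by linarith : -x ≤ 0), add_zero,
      ENNReal.ofReal_of_nonpos (by linarith : -y ≤ 0), add_zero,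
      ← ENNReal.ofReal_add (by linarith) hy]
    ring_nf
  · rw [ENNReal.ofReal_of_nonpos (by linarith : -x ≤ 0), add_zero,
      ENNReal.ofReal_of_nonpos hy.le, add_zero,
      ← ENNReal.ofReal_add hx (by linarith : (0:ℝ) ≤ -y)]
    ring_nf
  · linarith
  · rw [ENNReal.ofReal_of_nonpos hx.le, ENNReal.ofReal_of_nonpos hy.le, add_zero, zero_add,
      ← ENNReal.ofReal_add (by linarith) (by linarith : (0:ℝ) ≤ -x)]
    ring_nf

lemma J_eq {Θ : Type*} [MeasurableSpace Θ] {L : Θ → ℝ} (hm : Measurable L) {b : ℝ}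
    (hb : ∀ θ, b ≤ L θ) (ν : Measure Θ) [IsProbabilityMeasure ν] :
    J L ν = ((∫⁻ θ, ENNReal.ofReal (L θ - b) ∂ν : ℝ≥0∞) : EReal) + (b : EReal) := by
  set A := ∫⁻ θ, ENNReal.ofReal (-L θ) ∂ν with hA
  set B := ∫⁻ θ, ENNReal.ofReal (L θ) ∂ν with hB
  set C := ∫⁻ θ, ENNReal.ofReal (L θ - b) ∂ν with hC
  have hAle : A ≤ ENNReal.ofReal (-b) := by
    calc A ≤ ∫⁻ _, ENNReal.ofReal (-b) ∂ν :=
          lintegral_mono fun θ => ENNReal.ofReal_le_ofReal (by linarith [hb θ])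
      _ = ENNReal.ofReal (-b) := by rw [lintegral_const, measure_univ, mul_one]
  have hAtop : A ≠ ⊤ := (lt_of_le_of_lt hAle ENNReal.ofReal_lt_top).ne
  have heq : C + A + ENNReal.ofReal b = B + ENNReal.ofReal (-b) := by
    have h1 : C + A = ∫⁻ θ, (ENNReal.ofReal (L θ - b) + ENNReal.ofReal (-L θ)) ∂ν :=
      (lintegral_add_left ((hm.sub measurable_const).ennreal_ofReal) _).symm
    have h2 : C + A + ENNReal.ofReal b
        = ∫⁻ θ, (ENNReal.ofReal (L θ - b) + ENNReal.ofReal (-L θ) + ENNReal.ofReal b) ∂ν := by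
      rw [h1, lintegral_add_right _ measurable_const, lintegral_const, measure_univ, mul_one]
    have h3 : B + ENNReal.ofReal (-b)
        = ∫⁻ θ, (ENNReal.ofReal (L θ) + ENNReal.ofReal (-b)) ∂ν := by
      rw [lintegral_add_right _ measurable_const, lintegral_const, measure_univ, mul_one]
    rw [h2, h3]
    exact lintegral_congr fun θ => ofReal_shift_pt (hb θ)
  show (B : EReal) - (A : EReal) = (C : EReal) + (b : EReal)
  rcases eq_or_ne C ⊤ with hCtop | hCtop
  · have hBtop : B = ⊤ := by
      by_contra hBt
      have : B + ENNReal.ofReal (-b) ≠ ⊤ :=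
        ENNReal.add_ne_top.mpr ⟨hBt, ENNReal.ofReal_ne_top⟩
      rw [← heq] at this
      exact this (by rw [hCtop]; simp)
    rw [hBtop, hCtop, ennreal_coe_ereal_eq A hAtop]
    rw [EReal.coe_ennreal_top]
    rw [EReal.top_sub_coe]
    rfl
  · have hBtop : B ≠ ⊤ := by
      intro hBt
      rw [hBt] at heq
      have : C + A + ENNReal.ofReal b ≠ ⊤ :=
        ENNReal.add_ne_top.mpr ⟨ENNReal.add_ne_top.mpr ⟨hCtop, hAtop⟩, ENNReal.ofReal_ne_top⟩
      rw [heq] at this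
      exact this (by simp)
    have hreal : B.toReal - A.toReal = C.toReal + b := by
      have := congrArg ENNReal.toReal heq
      rw [ENNReal.toReal_add (ENNReal.add_ne_top.mpr ⟨hCtop, hAtop⟩) ENNReal.ofReal_ne_top,
        ENNReal.toReal_add hCtop hAtop,
        ENNReal.toReal_add hBtop ENNReal.ofReal_ne_top] at this
      rcases le_or_gt 0 b with hb0 | hb0
      · rw [ENNReal.toReal_ofReal hb0, ENNReal.ofReal_of_nonpos (by linarith : -b ≤ 0)] at this
        simp at this
        linarith
      · rw [ENNReal.ofReal_of_nonpos hb0.le, ENNReal.toReal_ofReal (by linarith : (0:ℝ) ≤ -b)]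
          at this
        simp at this
        linarith
    rw [ennreal_coe_ereal_eq A hAtop, ennreal_coe_ereal_eq B hBtop, ennreal_coe_ereal_eq C hCtop,
      ← EReal.coe_sub, ← EReal.coe_add, hreal]

lemma J_ge {Θ : Type*} [MeasurableSpace Θ] {L : Θ → ℝ} (hm : Measurable L) {b : ℝ}
    (hb : ∀ θ, b ≤ L θ) (ν : Measure Θ) [IsProbabilityMeasure ν] :
    (b : EReal) ≤ J L ν := by
  rw [J_eq hm hb ν]
  calc (b : EReal) = 0 + (b : EReal) := (zero_add _).symm
    _ ≤ _ := add_le_add_left (EReal.coe_ennreal_nonneg _) _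

/-- lower semicontinuity of the lintegral of an lsc nonneg function under the liminf-open cond -/
lemma lsc_lintegral_le_liminf {Θ : Type*} [MeasurableSpace Θ] [TopologicalSpace Θ]
    [OpensMeasurableSpace Θ]
    {μ : Measure Θ} {μs : ℕ → Measure Θ} {f : Θ → ℝ} (f_lsc : LowerSemicontinuous f)
    (f_nn : 0 ≤ f)
    (h_opens : ∀ G, IsOpen G → μ G ≤ atTop.liminf (fun i => μs i G)) :
    ∫⁻ x, ENNReal.ofReal (f x) ∂μ ≤ atTop.liminf (fun i => ∫⁻ x, ENNReal.ofReal (f x) ∂(μs i)) := by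
  simp_rw [lintegral_eq_lintegral_meas_lt _ (Eventually.of_forall f_nn)
    f_lsc.measurable.aemeasurable]
  calc ∫⁻ (t : ℝ) in Set.Ioi 0, μ {a | t < f a}
      ≤ ∫⁻ (t : ℝ) in Set.Ioi 0, atTop.liminf (fun i => (μs i) {a | t < f a}) :=
        lintegral_mono (fun t => h_opens _ (f_lsc.isOpen_preimage t))
    _ ≤ atTop.liminf (fun i => ∫⁻ (t : ℝ) in Set.Ioi 0, (μs i) {a | t < f a}) :=
        lintegral_liminf_le (fun n => Antitone.measurable (fun s t hst =>
          measure_mono (fun ω hω => lt_of_le_of_lt hst hω)))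


section Prokhorov
variable [TopologicalSpace Θ] [PolishSpace Θ] [MeasurableSpace Θ] [BorelSpace Θ]

theorem tight_seq_exists_subseq (P : ℕ → ProbabilityMeasure Θ)
    (tight : ∀ ε : ℝ≥0, 0 < ε → ∃ K : Set Θ, IsCompact K ∧ ∀ k, (P k : Measure Θ) Kᶜ ≤ ε) :
    ∃ (φ : ℕ → ℕ) (μP : ProbabilityMeasure Θ), StrictMono φ ∧
      Tendsto (fun k => P (φ k)) atTop (𝓝 μP) ∧
      ∀ (σ : ℕ → ℕ), StrictMono σ → ∀ G : Set Θ, IsOpen G →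
        (μP : Measure Θ) G ≤ atTop.liminf (fun k => (P (φ (σ k)) : Measure Θ) G) := by
  letI := TopologicalSpace.upgradeIsCompletelyMetrizable Θ
  have hne : Nonempty Θ := by
    by_contra h
    rw [not_nonempty_iff] at h
    have h1 : (P 0 : Measure Θ) Set.univ = 1 := measure_univ
    rw [Set.univ_eq_empty_iff.mpr h, measure_empty] at h1
    exact zero_ne_one h1
  set x : ℕ → Θ := TopologicalSpace.denseSeq Θ with hxdef
  have hx : DenseRange x := TopologicalSpace.denseRange_denseSeq Θ
  -- diagonal extraction of subsequence converging on all ABalls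
  obtain ⟨α, φ, hφ, hconv⟩ := CompactSpace.tendsto_subseq
    (X := Finset (ℕ × ℚ) → ℝ≥0∞)
    (fun n (S : Finset (ℕ × ℚ)) => (P n : Measure Θ) (ABalls x S))
  have hα : ∀ S, Tendsto (fun k => (P (φ k) : Measure Θ) (ABalls x S)) atTop (𝓝 (α S)) :=
    fun S => hconv.apply_nhds S
  have hα1 : ∀ S, α S ≤ 1 :=
    fun S => le_of_tendsto (hα S) (Eventually.of_forall fun k => prob_le_one)
  have hαtop : ∀ S, α S ≠ ⊤ := fun S => (lt_of_le_of_lt (hα1 S) ENNReal.one_lt_top).ne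
  have hαmono : ∀ S T, ABalls x S ⊆ ABalls x T → α S ≤ α T :=
    fun S T h => le_of_tendsto_of_tendsto' (hα S) (hα T) fun k => measure_mono h
  have hαadd : ∀ S T, Disjoint (ABalls x S) (ABalls x T) → α (S ∪ T) = α S + α T := by
    intro S T hdisj
    refine tendsto_nhds_unique (hα (S ∪ T)) ?_
    have : (fun k => (P (φ k) : Measure Θ) (ABalls x (S ∪ T)))
        = fun k => (P (φ k) : Measure Θ) (ABalls x S) + (P (φ k) : Measure Θ) (ABalls x T) := by
      funext k
      rw [ABalls_union, measure_union hdisj (measurableSet_ABalls x T)]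
    rw [this]
    exact (hα S).add (hα T)
  have hαsub : ∀ S T, α (S ∪ T) ≤ α S + α T := by
    intro S T
    refine le_of_tendsto_of_tendsto' (hα (S ∪ T)) ((hα S).add (hα T)) fun k => ?_
    rw [ABalls_union]
    exact measure_union_le _ _
  -- the inner content candidate
  set β : TopologicalSpace.Compacts Θ → ℝ≥0∞ :=
    fun K => ⨅ S : {S : Finset (ℕ × ℚ) // (K : Set Θ) ⊆ interior (ABalls x S)}, α S with hβdef
  have βle : ∀ (K : TopologicalSpace.Compacts Θ) (S : Finset (ℕ × ℚ))
      (h : (K : Set Θ) ⊆ interior (ABalls x S)), β K ≤ α S :=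
    fun K S h => iInf_le _ (⟨S, h⟩ : {S // (K : Set Θ) ⊆ interior (ABalls x S)})
  have βne : ∀ K : TopologicalSpace.Compacts Θ,
      Nonempty {S : Finset (ℕ × ℚ) // (K : Set Θ) ⊆ interior (ABalls x S)} := by
    intro K
    obtain ⟨S, hS1, _⟩ := exists_ABalls_between hx K.2 isOpen_univ (Set.subset_univ _)
    exact ⟨⟨S, hS1⟩⟩
  have hβ1 : ∀ K, β K ≤ 1 := by
    intro K
    obtain ⟨⟨S, hS⟩⟩ := βne K
    exact (βle K S hS).trans (hα1 S)
  have hβtop : ∀ K, β K ≠ ⊤ := fun K => (lt_of_le_of_lt (hβ1 K) ENNReal.one_lt_top).ne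
  -- content fields
  have βmono : ∀ K₁ K₂ : TopologicalSpace.Compacts Θ, (K₁ : Set Θ) ⊆ K₂ → β K₁ ≤ β K₂ := by
    intro K₁ K₂ hsub
    refine le_iInf fun ⟨S, hS⟩ => βle K₁ S (hsub.trans hS)
  have βsup_le : ∀ K₁ K₂ : TopologicalSpace.Compacts Θ, β (K₁ ⊔ K₂) ≤ β K₁ + β K₂ := by
    intro K₁ K₂
    have key : β K₁ + β K₂ = ⨅ S₁ : {S // (K₁ : Set Θ) ⊆ interior (ABalls x S)},
        ⨅ S₂ : {S // (K₂ : Set Θ) ⊆ interior (ABalls x S)}, (α S₁ + α S₂) := by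
      rw [hβdef]
      rw [ENNReal.iInf_add]
      exact iInf_congr fun S₁ => ENNReal.add_iInf
    rw [key]
    refine le_iInf fun ⟨S₁, h₁⟩ => le_iInf fun ⟨S₂, h₂⟩ => ?_
    refine le_trans (βle _ (S₁ ∪ S₂) ?_) (hαsub S₁ S₂)
    have : (↑(K₁ ⊔ K₂) : Set Θ) = (K₁ : Set Θ) ∪ K₂ := rfl
    rw [this, ABalls_union]
    exact Set.union_subset
      (h₁.trans (interior_mono Set.subset_union_left))
      (h₂.trans (interior_mono Set.subset_union_right))
  have βsup_disjoint : ∀ K₁ K₂ : TopologicalSpace.Compacts Θ, Disjoint (K₁ : Set Θ) K₂ →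
      β K₁ + β K₂ ≤ β (K₁ ⊔ K₂) := by
    intro K₁ K₂ hdisj
    obtain ⟨G₁, G₂, hG₁, hG₂, hK₁G₁, hK₂G₂, hGdisj⟩ :=
      SeparatedNhds.of_isCompact_isCompact K₁.2 K₂.2 hdisj
    refine le_iInf fun ⟨S, hS⟩ => ?_
    have hsub : ((K₁ ⊔ K₂ : TopologicalSpace.Compacts Θ) : Set Θ) = (K₁ : Set Θ) ∪ K₂ := rfl
    rw [hsub] at hS
    obtain ⟨T₁, hT₁, hT₁sub⟩ := exists_ABalls_between hx K₁.2
      (hG₁.inter isOpen_interior)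
      (Set.subset_inter hK₁G₁ ((Set.subset_union_left).trans hS))
    obtain ⟨T₂, hT₂, hT₂sub⟩ := exists_ABalls_between hx K₂.2
      (hG₂.inter isOpen_interior)
      (Set.subset_inter hK₂G₂ ((Set.subset_union_right).trans hS))
    have hTdisj : Disjoint (ABalls x T₁) (ABalls x T₂) :=
      hGdisj.mono (hT₁sub.trans (Set.inter_subset_left))
        (hT₂sub.trans (Set.inter_subset_left))
    calc β K₁ + β K₂ ≤ α T₁ + α T₂ := add_le_add (βle K₁ T₁ hT₁) (βle K₂ T₂ hT₂)
      _ = α (T₁ ∪ T₂) := (hαadd T₁ T₂ hTdisj).symm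
      _ ≤ α S := by
          apply hαmono
          rw [ABalls_union]
          exact Set.union_subset
            ((hT₁sub.trans Set.inter_subset_right).trans interior_subset)
            ((hT₂sub.trans Set.inter_subset_right).trans interior_subset)
  -- assemble the content
  set lam : Content Θ :=
    { toFun := fun K => (β K).toNNReal
      mono' := fun K₁ K₂ h => ENNReal.toNNReal_mono (hβtop K₂) (βmono K₁ K₂ h)
      sup_disjoint' := by
        intro K₁ K₂ hd _ _
        have h1 : β (K₁ ⊔ K₂) = β K₁ + β K₂ :=
          le_antisymm (βsup_le K₁ K₂) (βsup_disjoint K₁ K₂ hd)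
        show (β (K₁ ⊔ K₂)).toNNReal = (β K₁).toNNReal + (β K₂).toNNReal
        rw [h1, ENNReal.toNNReal_add (hβtop K₁) (hβtop K₂)]
      sup_le' := by
        intro K₁ K₂
        have := βsup_le K₁ K₂
        rw [← ENNReal.toNNReal_add (hβtop K₁) (hβtop K₂)] at *
        exact ENNReal.toNNReal_mono (ENNReal.add_ne_top.mpr ⟨hβtop K₁, hβtop K₂⟩) this } with hlamdef
  have lamcoe : ∀ K, (lam K : ℝ≥0∞) = β K := fun K => ENNReal.coe_toNNReal (hβtop K)
  -- the measure
  have hopenmeas : ∀ (G : Set Θ) (hG : IsOpen G),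
      lam.measure G = lam.innerContent ⟨G, hG⟩ := by
    intro G hG
    rw [Content.measure_apply lam hG.measurableSet, Content.outerMeasure_of_isOpen lam G hG]
  -- probability
  have hprob : IsProbabilityMeasure lam.measure := by
    constructor
    rw [hopenmeas Set.univ isOpen_univ]
    refine le_antisymm ?_ ?_
    · refine iSup₂_le fun K _ => ?_
      rw [lamcoe K]
      exact hβ1 K
    · refine ENNReal.le_of_forall_pos_le_add fun ε hε _ => ?_
      obtain ⟨K, hKcomp, hKtight⟩ := tight ε hε
      have key : ∀ (S : Finset (ℕ × ℚ)), K ⊆ interior (ABalls x S) → 1 ≤ α S + ε := by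
        intro S hS
        refine le_of_tendsto_of_tendsto' (tendsto_const_nhds (x := (1:ℝ≥0∞)))
          ((hα S).add tendsto_const_nhds) fun k => ?_
        have huniv : (Set.univ : Set Θ) ⊆ ABalls x S ∪ Kᶜ := by
          intro θ _
          by_cases hθ : θ ∈ K
          · exact Or.inl (interior_subset (hS hθ))
          · exact Or.inr hθ
        calc (1:ℝ≥0∞) = (P (φ k) : Measure Θ) Set.univ := measure_univ.symm
          _ ≤ (P (φ k) : Measure Θ) (ABalls x S ∪ Kᶜ) := measure_mono huniv
          _ ≤ (P (φ k) : Measure Θ) (ABalls x S) + (P (φ k) : Measure Θ) Kᶜ := measure_union_le _ _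
          _ ≤ (P (φ k) : Measure Θ) (ABalls x S) + ε := add_le_add_right (hKtight (φ k)) _
      have hβK : 1 ≤ β ⟨K, hKcomp⟩ + ε := by
        rw [hβdef, ENNReal.iInf_add]
        exact le_iInf fun ⟨S, hS⟩ => key S hS
      refine hβK.trans (add_le_add_left ?_ _)
      rw [← lamcoe ⟨K, hKcomp⟩]
      exact le_iSup₂ (f := fun (K' : TopologicalSpace.Compacts Θ)
        (_ : (K' : Set Θ) ⊆ ((⟨Set.univ, isOpen_univ⟩ : TopologicalSpace.Opens Θ) : Set Θ)) =>
        (lam K' : ℝ≥0∞)) ⟨K, hKcomp⟩ (Set.subset_univ _)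
  -- open liminf property along any further subsequence
  have hliminf : ∀ (σ : ℕ → ℕ), StrictMono σ → ∀ G : Set Θ, IsOpen G →
      lam.measure G ≤ atTop.liminf (fun k => (P (φ (σ k)) : Measure Θ) G) := by
    intro σ hσ G hG
    rw [hopenmeas G hG]
    refine iSup₂_le fun K hKG => ?_
    obtain ⟨S, hS1, hS2⟩ := exists_ABalls_between hx K.2 hG hKG
    rw [lamcoe K]
    refine (βle K S hS1).trans ?_
    have hsub : Tendsto (fun k => (P (φ (σ k)) : Measure Θ) (ABalls x S)) atTop (𝓝 (α S)) :=
      (hα S).comp hσ.tendsto_atTop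
    rw [← hsub.liminf_eq]
    exact liminf_le_liminf (Eventually.of_forall fun k => measure_mono hS2)
  -- conclude
  set μpr : ProbabilityMeasure Θ := ⟨lam.measure, hprob⟩ with hμprdef
  refine ⟨φ, μpr, hφ, ?_, hliminf⟩
  apply MeasureTheory.tendsto_of_forall_isOpen_le_liminf
  intro G hG
  have h := hliminf id strictMono_id G hG
  have aux : (ENNReal.ofNNReal (liminf (fun i => (P (φ i)) G) atTop)) =
      liminf (ENNReal.ofNNReal ∘ fun i => (P (φ i)) G) atTop := by
    refine Monotone.map_liminf_of_continuousAt (F := atTop) ENNReal.coe_mono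
      (fun i => (P (φ i)) G) ENNReal.continuous_coe.continuousAt ?_ ?_
    · exact IsBoundedUnder.isCoboundedUnder_ge ⟨1, by simp⟩
    · exact ⟨0, by simp⟩
  rw [← ENNReal.coe_le_coe, aux]
  have hfun : (ENNReal.ofNNReal ∘ fun i => (P (φ i)) G) = fun k => (P (φ k) : Measure Θ) G :=
    funext fun k => ProbabilityMeasure.ennreal_coeFn_eq_coeFn_toMeasure _ _
  rw [hfun]
  have hG' : (ENNReal.ofNNReal (μpr G)) = lam.measure G :=
    ProbabilityMeasure.ennreal_coeFn_eq_coeFn_toMeasure _ _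
  rw [hG']
  exact h
end Prokhorov


end Aux

/-- Existence and uniqueness of the GVI posterior when additionally `𝒬` is convex
and the divergence is strictly convex in its first argument. -/
theorem gvi_posterior_existsUnique {Θ : Type*} [TopologicalSpace Θ] [PolishSpace Θ]
    [MeasurableSpace Θ] [BorelSpace Θ]
    (L : Θ → ℝ) (hLmeas : Measurable L) (hLbdd : ∃ b : ℝ, ∀ θ, b ≤ L θ)
    (hLlsc : LowerSemicontinuous L) (hLcoer : Coercive L)
    (𝒬 : Set (ProbabilityMeasure Θ)) (h𝒬 : IsClosed 𝒬)
    (h𝒬conv : ∀ μ ∈ 𝒬, ∀ ν ∈ 𝒬, ∀ (a : ℝ) (ha0 : 0 ≤ a) (ha1 : a ≤ 1), mix μ ν a ha0 ha1 ∈ 𝒬)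
    (D : ProbabilityMeasure Θ → ProbabilityMeasure Θ → ℝ)
    (hDnn : ∀ P Q : ProbabilityMeasure Θ, 0 ≤ D P Q)
    (hDlsc : ∀ P : ProbabilityMeasure Θ, LowerSemicontinuous fun Q => D Q P)
    (Pr : ProbabilityMeasure Θ)
    (hDconv : ∀ μ ν : ProbabilityMeasure Θ, μ ≠ ν → ∀ (a : ℝ) (h0 : 0 < a) (h1 : a < 1),
      D (mix μ ν a h0.le h1.le) Pr < a * D μ Pr + (1 - a) * D ν Pr)
    (M β : ℝ) (hM : 0 < M) (hβ : 0 < β) (n : ℕ) (hn : 1 ≤ n)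
    (hDbdd : ∀ Q ∈ 𝒬, D Q Pr ≤ M)
    (Pstar : ProbabilityMeasure Θ) (hPstar𝒬 : Pstar ∈ 𝒬)
    (hPstar : ∀ Q ∈ 𝒬, J L (Pstar : Measure Θ) ≤ J L (Q : Measure Θ))
    (hfin : ∃ Q ∈ 𝒬, T n β L D Pr Q < (⊤ : EReal)) :
    ∃! Qn : ProbabilityMeasure Θ, Qn ∈ 𝒬 ∧ ∀ Q ∈ 𝒬, T n β L D Pr Qn ≤ T n β L D Pr Q := by
  classical
  obtain ⟨b, hb⟩ := hLbdd
  -- the shifted integrand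
  set g : Θ → ℝ := fun θ => L θ - b with hgdef
  have hgmeas : Measurable g := hLmeas.sub measurable_const
  have hg_nn : 0 ≤ g := fun θ => by simp [hgdef]; linarith [hb θ]
  have hg_lsc : LowerSemicontinuous g := by
    intro x y hy
    have : y + b < L x := by simp [hgdef] at hy; linarith
    filter_upwards [hLlsc x (y + b) this] with x' hx'
    simp [hgdef]; linarith
  set I : ProbabilityMeasure Θ → ℝ≥0∞ :=
    fun ν => ∫⁻ θ, ENNReal.ofReal (g θ) ∂(ν : Measure Θ) with hIdef
  have hnpos : (0:ℝ) < n := by exact_mod_cast Nat.lt_of_lt_of_le Nat.zero_lt_one hn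
  -- T formulas
  have hTreal : ∀ Q : ProbabilityMeasure Θ, I Q ≠ ⊤ →
      T n β L D Pr Q = (((n:ℝ) * ((I Q).toReal + b) + 1/β * D Q Pr : ℝ) : EReal) := by
    intro Q h
    show ((n : ℝ) : EReal) * J L (Q : Measure Θ) + ((1 / β * D Q Pr : ℝ) : EReal) = _
    rw [J_eq hLmeas hb, ennreal_coe_ereal_eq _ h, ← EReal.coe_add, ← EReal.coe_mul,
      ← EReal.coe_add]
  have hTtop : ∀ Q : ProbabilityMeasure Θ, I Q = ⊤ → T n β L D Pr Q = ⊤ := by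
    intro Q h
    show ((n : ℝ) : EReal) * J L (Q : Measure Θ) + ((1 / β * D Q Pr : ℝ) : EReal) = ⊤
    rw [J_eq hLmeas hb,
      show (∫⁻ θ, ENNReal.ofReal (L θ - b) ∂(Q : Measure Θ)) = I Q from rfl, h,
      EReal.coe_ennreal_top, EReal.top_add_coe,
      EReal.coe_mul_top_of_pos hnpos, EReal.top_add_coe]
  -- the infimum
  set m : EReal := ⨅ Q : 𝒬, T n β L D Pr Q with hmdef
  have hmle : ∀ Q ∈ 𝒬, m ≤ T n β L D Pr Q := fun Q h => iInf_le _ (⟨Q, h⟩ : 𝒬)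
  obtain ⟨Q0, hQ0𝒬, hQ0fin⟩ := hfin
  have hmtop : m < ⊤ := lt_of_le_of_lt (hmle Q0 hQ0𝒬) hQ0fin
  have hTlow : ∀ Q : ProbabilityMeasure Θ, (((n:ℝ) * b : ℝ) : EReal) ≤ T n β L D Pr Q := by
    intro Q
    by_cases h : I Q = ⊤
    · rw [hTtop Q h]; exact le_top
    · rw [hTreal Q h]
      rw [EReal.coe_le_coe_iff]
      have h1 : 0 ≤ (I Q).toReal := ENNReal.toReal_nonneg
      have h2 : 0 ≤ D Q Pr := hDnn Q Pr
      have h3 : 0 ≤ 1/β := by positivity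
      nlinarith
  have hmbot : (⊥ : EReal) < m := by
    refine lt_of_lt_of_le (EReal.bot_lt_coe ((n:ℝ) * b)) (le_iInf fun Q => hTlow Q)
  set mr : ℝ := m.toReal with hmrdef
  have hmr : m = (mr : EReal) := (EReal.coe_toReal hmtop.ne hmbot.ne').symm
  -- minimising sequence
  have hseq : ∀ k : ℕ, ∃ Q : ProbabilityMeasure Θ,
      Q ∈ 𝒬 ∧ T n β L D Pr Q < ((mr + 1/(k+1) : ℝ) : EReal) := by
    intro k
    have hlt : m < ((mr + 1/(k+1) : ℝ) : EReal) := by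
      rw [hmr, EReal.coe_lt_coe_iff]
      have : (0:ℝ) < 1/(k+1) := by positivity
      linarith
    rw [hmdef] at hlt
    obtain ⟨⟨Q, hQ⟩, h⟩ := iInf_lt_iff.mp hlt
    exact ⟨Q, hQ, h⟩
  choose Qs hQs𝒬 hQsT using hseq
  -- uniform bound on I
  have hIne : ∀ k, I (Qs k) ≠ ⊤ := by
    intro k h
    have hk := hQsT k
    rw [hTtop _ h] at hk
    exact not_top_lt hk
  set Creal : ℝ := (mr + 1)/(n:ℝ) - b with hCrealdef
  have hIreal : ∀ k, (I (Qs k)).toReal ≤ Creal := by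
    intro k
    have h := hQsT k
    rw [hTreal _ (hIne k), EReal.coe_lt_coe_iff] at h
    have h1 : 0 ≤ D (Qs k) Pr := hDnn _ Pr
    have h2 : 0 ≤ 1/β := by positivity
    have h3 : 1/((k:ℝ)+1) ≤ 1 := by
      rw [div_le_one (by positivity)]
      simp
    have h4 : (n:ℝ) * ((I (Qs k)).toReal + b) ≤ mr + 1 := by nlinarith
    have h5 : ((I (Qs k)).toReal + b) ≤ (mr + 1)/(n:ℝ) :=
      (le_div_iff₀ hnpos).mpr (by linarith)
    rw [hCrealdef]
    linarith
  have hCnn : 0 ≤ Creal := le_trans ENNReal.toReal_nonneg (hIreal 0)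
  have hIbound : ∀ k, I (Qs k) ≤ ENNReal.ofReal Creal := by
    intro k
    rw [← ENNReal.ofReal_toReal (hIne k)]
    exact ENNReal.ofReal_le_ofReal (hIreal k)
  -- tightness
  have tight : ∀ ε : ℝ≥0, 0 < ε → ∃ K : Set Θ, IsCompact K ∧
      ∀ k, (Qs k : Measure Θ) Kᶜ ≤ ε := by
    intro ε hε
    have hεR : (0:ℝ) < (ε:ℝ) := hε
    set c : ℝ := Creal / (ε:ℝ) + 1 with hcdef
    have hc : 0 < c := by positivity
    obtain ⟨K, hKcomp, hKc⟩ := hLcoer (c + b)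
    refine ⟨K, hKcomp, fun k => ?_⟩
    have hsub : Kᶜ ⊆ {θ | ENNReal.ofReal c ≤ ENNReal.ofReal (g θ)} := by
      intro θ hθ
      exact ENNReal.ofReal_le_ofReal (by simp [hgdef]; linarith [hKc θ hθ])
    calc (Qs k : Measure Θ) Kᶜ
        ≤ (Qs k : Measure Θ) {θ | ENNReal.ofReal c ≤ ENNReal.ofReal (g θ)} :=
          measure_mono hsub
      _ ≤ I (Qs k) / ENNReal.ofReal c := by
          refine meas_ge_le_lintegral_div (hgmeas.ennreal_ofReal.aemeasurable) ?_ ?_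
          · simp [ENNReal.ofReal_eq_zero, hc, not_le]
          · exact ENNReal.ofReal_ne_top
      _ ≤ ENNReal.ofReal Creal / ENNReal.ofReal c :=
          ENNReal.div_le_div_right (hIbound k) _
      _ = ENNReal.ofReal (Creal / c) := (ENNReal.ofReal_div_of_pos hc).symm
      _ ≤ ENNReal.ofReal (ε:ℝ) := by
          refine ENNReal.ofReal_le_ofReal ?_
          rw [div_le_iff₀ hc]
          rw [hcdef]
          have : (ε:ℝ) * (Creal / (ε:ℝ)) = Creal := by field_simp
          nlinarith
      _ = (ε : ℝ≥0∞) := ENNReal.ofReal_coe_nnreal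
  -- Prokhorov
  obtain ⟨φ, μP, hφ, htend0, hlim⟩ := tight_seq_exists_subseq Qs tight
  have hμP𝒬 : μP ∈ 𝒬 :=
    h𝒬.mem_of_tendsto htend0 (Eventually.of_forall fun k => hQs𝒬 _)
  -- further subsequences making scalar quantities converge
  obtain ⟨jlim, ψ, hψ, hjconv⟩ := CompactSpace.tendsto_subseq (X := ℝ≥0∞)
    (fun k => I (Qs (φ k)))
  obtain ⟨dlim, hdmem, ψ₂, hψ₂, hdconv⟩ := (isCompact_Icc (a := (0:ℝ)) (b := M)).tendsto_subseq
    (x := fun k => D (Qs (φ (ψ k))) Pr)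
    (fun k => ⟨hDnn _ Pr, hDbdd _ (hQs𝒬 _)⟩)
  set σ : ℕ → ℕ := fun k => ψ (ψ₂ k) with hσdef
  have hσ : StrictMono σ := hψ.comp hψ₂
  set Rs : ℕ → ProbabilityMeasure Θ := fun k => Qs (φ (σ k)) with hRsdef
  have htendR : Tendsto Rs atTop (𝓝 μP) := htend0.comp hσ.tendsto_atTop
  have hIconv : Tendsto (fun k => I (Rs k)) atTop (𝓝 jlim) := hjconv.comp hψ₂.tendsto_atTop
  have hjlim_ne : jlim ≠ ⊤ := by
    have : jlim ≤ ENNReal.ofReal Creal :=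
      le_of_tendsto hIconv (Eventually.of_forall fun k => hIbound _)
    exact (lt_of_le_of_lt this ENNReal.ofReal_lt_top).ne
  have hdconv' : Tendsto (fun k => D (Rs k) Pr) atTop (𝓝 dlim) := hdconv
  -- the real values converge to mr
  set treal : ℕ → ℝ := fun k => (n:ℝ) * ((I (Rs k)).toReal + b) + 1/β * D (Rs k) Pr with htrdef
  set tlim : ℝ := (n:ℝ) * (jlim.toReal + b) + 1/β * dlim with htlimdef
  have htconv : Tendsto treal atTop (𝓝 tlim) := by
    refine Tendsto.add ?_ (Tendsto.const_mul _ hdconv')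
    refine Tendsto.const_mul _ (Tendsto.add_const _ ?_)
    exact (ENNReal.tendsto_toReal hjlim_ne).comp hIconv
  have hIRne : ∀ k, I (Rs k) ≠ ⊤ := fun k => hIne _
  have hlower : ∀ k, mr ≤ treal k := by
    intro k
    have h := hmle (Rs k) (hQs𝒬 _)
    rw [hmr, hTreal _ (hIRne k), EReal.coe_le_coe_iff] at h
    exact h
  have hupper : ∀ k, treal k ≤ mr + 1/(k+1) := by
    intro k
    have h := hQsT (φ (σ k))
    rw [hTreal _ (hIRne k), EReal.coe_lt_coe_iff] at h
    have hk : (k:ℝ) + 1 ≤ (φ (σ k) : ℝ) + 1 := by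
      have h0 : k ≤ φ (σ k) := (hφ.comp hσ).le_apply (x := k)
      have h0' : (k:ℝ) ≤ (φ (σ k) : ℝ) := by exact_mod_cast h0
      linarith
    have : 1/((φ (σ k) : ℝ)+1) ≤ 1/((k:ℝ)+1) :=
      one_div_le_one_div_of_le (by positivity) hk
    calc treal k ≤ mr + 1/((φ (σ k):ℝ)+1) := le_of_lt h
      _ ≤ mr + 1/((k:ℝ)+1) := by linarith
  have htlim_eq : tlim = mr := by
    refine le_antisymm ?_ (ge_of_tendsto' htconv hlower)
    have hto : Tendsto (fun k : ℕ => mr + 1/((k:ℝ)+1)) atTop (𝓝 (mr + 0)) :=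
      Tendsto.add tendsto_const_nhds tendsto_one_div_add_atTop_nhds_zero_nat
    rw [add_zero] at hto
    exact le_of_tendsto_of_tendsto' htconv hto hupper
  -- lower semicontinuity at μP
  have hIμ : I μP ≤ jlim := by
    have h_opens := hlim σ hσ
    have := lsc_lintegral_le_liminf (μ := (μP : Measure Θ))
      (μs := fun k => (Rs k : Measure Θ)) hg_lsc hg_nn h_opens
    rw [hIconv.liminf_eq] at this
    exact this
  have hIμne : I μP ≠ ⊤ := fun hh => hjlim_ne (top_le_iff.mp (hh ▸ hIμ))
  have hDμ : D μP Pr ≤ dlim := by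
    by_contra hcon
    push_neg at hcon
    obtain ⟨y, hy1, hy2⟩ := exists_between hcon
    have hev := (hDlsc Pr) μP y hy2
    have hev2 : ∀ᶠ k in atTop, y < D (Rs k) Pr := htendR.eventually hev
    have hyd : y ≤ dlim := ge_of_tendsto hdconv' (hev2.mono fun k hk => hk.le)
    linarith
  have hTμ : T n β L D Pr μP ≤ m := by
    rw [hTreal μP hIμne, hmr, ← htlim_eq, EReal.coe_le_coe_iff, htlimdef]
    have h1 : (I μP).toReal ≤ jlim.toReal := ENNReal.toReal_mono hjlim_ne hIμ
    have h3 : (0:ℝ) < 1/β := by positivity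
    nlinarith [hnpos]
  refine ⟨μP, ⟨hμP𝒬, fun Q hQ => hTμ.trans (hmle Q hQ)⟩, ?_⟩
  -- uniqueness
  rintro Q1 ⟨hQ1𝒬, hQ1min⟩
  by_contra hne
  have hT12 : T n β L D Pr Q1 = T n β L D Pr μP :=
    le_antisymm (hQ1min μP hμP𝒬) (hTμ.trans (hmle Q1 hQ1𝒬))
  have hfin1 : T n β L D Pr Q1 < ⊤ := lt_of_le_of_lt (hQ1min Q0 hQ0𝒬) hQ0fin
  have hIQ1ne : I Q1 ≠ ⊤ := by
    intro hh
    rw [hTtop _ hh] at hfin1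
    exact not_top_lt hfin1
  have h12 : (1:ℝ) - 1/2 = 1/2 := by norm_num
  set R : ProbabilityMeasure Θ := mix Q1 μP (1/2) (by norm_num) (by norm_num) with hRdef
  have hR𝒬 : R ∈ 𝒬 := h𝒬conv Q1 hQ1𝒬 μP hμP𝒬 (1/2) (by norm_num) (by norm_num)
  have hIR : I R = ENNReal.ofReal (1/2) * I Q1 + ENNReal.ofReal (1/2) * I μP := by
    show ∫⁻ θ, ENNReal.ofReal (g θ) ∂((R : Measure Θ)) = _
    have hRm : (R : Measure Θ) = ENNReal.ofReal (1/2) • (Q1 : Measure Θ)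
        + ENNReal.ofReal (1 - 1/2) • (μP : Measure Θ) := rfl
    rw [hRm, lintegral_add_measure, lintegral_smul_measure, lintegral_smul_measure, h12, smul_eq_mul, smul_eq_mul]
  have hIRne : I R ≠ ⊤ := by
    rw [hIR]
    exact ENNReal.add_ne_top.mpr ⟨ENNReal.mul_ne_top ENNReal.ofReal_ne_top hIQ1ne,
      ENNReal.mul_ne_top ENNReal.ofReal_ne_top hIμne⟩
  have hIRtoReal : (I R).toReal = (1/2) * (I Q1).toReal + (1/2) * (I μP).toReal := by
    rw [hIR, ENNReal.toReal_add (ENNReal.mul_ne_top ENNReal.ofReal_ne_top hIQ1ne)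
      (ENNReal.mul_ne_top ENNReal.ofReal_ne_top hIμne), ENNReal.toReal_mul, ENNReal.toReal_mul,
      ENNReal.toReal_ofReal (by norm_num : (0:ℝ) ≤ 1/2)]
  have hDgap : D R Pr < (1/2) * D Q1 Pr + (1 - 1/2) * D μP Pr :=
    hDconv Q1 μP hne (1/2) (by norm_num) (by norm_num)
  have ht1 := hTreal Q1 hIQ1ne
  have ht2 := hTreal μP hIμne
  have hteq : (n:ℝ) * ((I Q1).toReal + b) + 1/β * D Q1 Pr
      = (n:ℝ) * ((I μP).toReal + b) + 1/β * D μP Pr := by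
    rw [ht1, ht2] at hT12
    exact_mod_cast EReal.coe_eq_coe_iff.mp hT12
  have htR := hTreal R hIRne
  have hTRlt : T n β L D Pr R < T n β L D Pr Q1 := by
    rw [htR, ht1, EReal.coe_lt_coe_iff]
    have h3 : (0:ℝ) < 1/β := by positivity
    rw [hIRtoReal]
    nlinarith [hDgap, hteq]
  have : T n β L D Pr Q1 ≤ T n β L D Pr R := hQ1min R hR𝒬
  exact absurd hTRlt (not_lt.mpr this)
end

section
/- Take 𝒬 = 𝒫(Θ). Let (L_n) be measurable, bounded below, lower semicontinuous, coercive functions Θ → ℝ with L_n → L pointwise, L lower semicontinuous, and inf_Θ L ≥ limsup_n inf_Θ L_n > −∞. Suppose D(Q,Π) ≤ M for all Q ∈ 𝒫(Θ), and for each n let Q_n be a minimiser of T_n(Q) = n·J_{L_n}(Q) + (1/β)·D(Q,Π) over 𝒫(Θ). Define N_ε := {θ ∈ Θ : L(θ) ≤ inf_Θ L + ε}. If for every ε > 0 one has liminf_n inf_{N_ε^c} L_n > inf_Θ L, then Q_n(N_ε) → 1 as n → ∞ for every ε > 0. -/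
open MeasureTheory Filter Topology
open scoped ENNReal NNReal

lemma ofReal_sub_ofReal_eq (a : ℝ) :
    ((ENNReal.ofReal a : ℝ≥0∞) : EReal) - ((ENNReal.ofReal (-a) : ℝ≥0∞) : EReal) = (a : EReal) := by
  rw [EReal.coe_ennreal_ofReal, EReal.coe_ennreal_ofReal, ← EReal.coe_sub]
  norm_cast
  rcases le_or_gt 0 a with h | h
  · simp [max_eq_left h, max_eq_right (neg_nonpos.mpr h)]
  · simp [max_eq_right h.le, max_eq_left (neg_nonneg.mpr h.le)]

lemma top_sub_ne_top' (N : ℝ≥0∞) (h : N ≠ ⊤) : (⊤ : EReal) - (N : EReal) = ⊤ := by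
  rw [← ENNReal.coe_toNNReal h, EReal.coe_nnreal_eq_coe_real]
  exact EReal.top_sub_coe _

lemma abs_split' (a : ℝ) : ENNReal.ofReal ‖a‖ = ENNReal.ofReal a + ENNReal.ofReal (-a) := by
  rcases le_or_gt 0 a with h | h
  · rw [Real.norm_of_nonneg h, ENNReal.ofReal_of_nonpos (neg_nonpos.mpr h), add_zero]
  · rw [Real.norm_of_nonpos h.le, ENNReal.ofReal_of_nonpos h.le, zero_add]

lemma coe_toReal_ereal' (x : ℝ≥0∞) (h : x ≠ ⊤) : ((x.toReal : ℝ) : EReal) = (x : EReal) := by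
  rw [← ENNReal.coe_toNNReal h, EReal.coe_nnreal_eq_coe_real, ENNReal.coe_toReal]

lemma J_dirac {Θ : Type*} [MeasurableSpace Θ] {f : Θ → ℝ} (hf : Measurable f) (θ : Θ) :
    J f (Measure.dirac θ) = ((f θ : ℝ) : EReal) := by
  rw [J, lintegral_dirac' θ hf.ennreal_ofReal, lintegral_dirac' θ (f := fun x => ENNReal.ofReal (-f x)) hf.neg.ennreal_ofReal]
  exact ofReal_sub_ofReal_eq (f θ)

lemma J_finite {Θ : Type*} [MeasurableSpace Θ] {f : Θ → ℝ} {ν : Measure Θ}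
    [IsProbabilityMeasure ν] (hf : Measurable f) {b : ℝ} (hb : ∀ θ, b ≤ f θ)
    (hne : J f ν ≠ ⊤) :
    Integrable f ν ∧ J f ν = ((∫ θ, f θ ∂ν : ℝ) : EReal) := by
  set P := ∫⁻ θ, ENNReal.ofReal (f θ) ∂ν with hP
  set N := ∫⁻ θ, ENNReal.ofReal (-f θ) ∂ν with hN
  have hNfin : N ≠ ⊤ := by
    have : N ≤ ENNReal.ofReal (-b) := by
      calc N ≤ ∫⁻ _, ENNReal.ofReal (-b) ∂ν :=
          lintegral_mono fun θ => ENNReal.ofReal_le_ofReal (by linarith [hb θ])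
        _ = ENNReal.ofReal (-b) := by simp
    exact ne_top_of_le_ne_top ENNReal.ofReal_ne_top this
  have hPfin : P ≠ ⊤ := by
    intro hPtop
    apply hne
    rw [J, ← hP, ← hN, hPtop, EReal.coe_ennreal_top]
    exact top_sub_ne_top' N hNfin
  have hint : Integrable f ν := by
    refine ⟨hf.aestronglyMeasurable, ?_⟩
    rw [hasFiniteIntegral_iff_norm]
    rw [lintegral_congr (fun θ => abs_split' (f θ)), lintegral_add_left hf.ennreal_ofReal]
    exact ENNReal.add_lt_top.mpr ⟨hPfin.lt_top, hNfin.lt_top⟩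
  refine ⟨hint, ?_⟩
  rw [integral_eq_lintegral_pos_part_sub_lintegral_neg_part hint, J, ← hP, ← hN,
    EReal.coe_sub, coe_toReal_ereal' _ hPfin, coe_toReal_ereal' _ hNfin]


set_option maxHeartbeats 400000 in
/-- With `𝒬 = 𝒫(Θ)`, a divergence bounded by `M`, and GVI posteriors `Q n`
minimising `T_n` over all probability measures, if for every `ε > 0` one has
`liminf_n inf_{N_ε^c} L_n > inf_Θ L∞`, then `Q n (N_ε) → 1` for every `ε > 0`. -/
theorem gvi_concentration_full_space {Θ : Type*} [TopologicalSpace Θ] [PolishSpace Θ]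
    [MeasurableSpace Θ] [BorelSpace Θ] [Nonempty Θ]
    (L : ℕ → Θ → ℝ) (Llim : Θ → ℝ)
    (hmeas : ∀ n, Measurable (L n)) (hbdd : ∀ n, ∃ b : ℝ, ∀ θ, b ≤ L n θ)
    (hlsc : ∀ n, LowerSemicontinuous (L n)) (hcoer : ∀ n, Coercive (L n))
    (hLlimlsc : LowerSemicontinuous Llim)
    (hconv : ∀ θ : Θ, Tendsto (fun n => L n θ) atTop (nhds (Llim θ)))
    (hinf1 : Filter.limsup (fun n => ((⨅ θ : Θ, L n θ : ℝ) : EReal)) atTop ≤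
      ((⨅ θ : Θ, Llim θ : ℝ) : EReal))
    (hinf2 : (⊥ : EReal) < Filter.limsup (fun n => ((⨅ θ : Θ, L n θ : ℝ) : EReal)) atTop)
    (D : ProbabilityMeasure Θ → ProbabilityMeasure Θ → ℝ)
    (hDnn : ∀ P Q : ProbabilityMeasure Θ, 0 ≤ D P Q)
    (Pr : ProbabilityMeasure Θ) (M β : ℝ) (hM : 0 < M) (hβ : 0 < β)
    (hDbdd : ∀ Q : ProbabilityMeasure Θ, D Q Pr ≤ M)
    (Qn : ℕ → ProbabilityMeasure Θ)
    (hQn : ∀ n, ∀ Q : ProbabilityMeasure Θ, T n β (L n) D Pr (Qn n) ≤ T n β (L n) D Pr Q)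
    (hsep : ∀ ε : ℝ, 0 < ε → ((⨅ θ : Θ, Llim θ : ℝ) : EReal) <
      Filter.liminf (fun n =>
        ((⨅ θ : ({θ : Θ | Llim θ ≤ (⨅ θ' : Θ, Llim θ') + ε}ᶜ : Set Θ), L n (θ : Θ) : ℝ) : EReal))
        atTop) :
    ∀ ε : ℝ, 0 < ε →
      Tendsto (fun n => ((Qn n) {θ : Θ | Llim θ ≤ (⨅ θ' : Θ, Llim θ') + ε} : ℝ)) atTop
        (nhds 1) := by
  intro ε hε
  set ℓ : ℝ := ⨅ θ' : Θ, Llim θ' with hℓdef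
  set S : Set Θ := {θ : Θ | Llim θ ≤ ℓ + ε} with hSdef
  by_cases hSc : Sᶜ = ∅
  · have hSuniv : S = Set.univ := Set.compl_empty_iff.mp hSc
    have : ∀ n, ((Qn n) S : ℝ) = 1 := by
      intro n
      rw [hSuniv]
      simp
    simpa [this] using tendsto_const_nhds (α := ℝ) (f := atTop)
  · have hScne : (Sᶜ : Set Θ).Nonempty := Set.nonempty_iff_ne_empty.mpr hSc
    haveI : Nonempty ↥(Sᶜ : Set Θ) := hScne.to_subtype
    have hSmeas : MeasurableSet S := by
      have : IsClosed S := hLlimlsc.isClosed_preimage (ℓ + ε)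
      exact this.measurableSet
    set c : ℕ → ℝ := fun n => ⨅ θ : Θ, L n θ with hcdef
    set d : ℕ → ℝ := fun n => ⨅ θ : (Sᶜ : Set Θ), L n (θ : Θ) with hddef
    -- real separation constants
    obtain ⟨x, hx1, hx2⟩ := EReal.exists_between_coe_real (hsep ε hε)
    set m : ℝ := (ℓ + x) / 2 with hmdef
    have hℓx : ℓ < x := by exact_mod_cast hx1
    have hℓm : ℓ < m := by rw [hmdef]; linarith
    have hmx : m < x := by rw [hmdef]; linarith
    set δ : ℝ := x - m with hδdef
    have hδpos : 0 < δ := by rw [hδdef]; linarith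
    -- eventually d n > x
    have hdev : ∀ᶠ n in atTop, x < d n := by
      have := Filter.eventually_lt_of_lt_liminf hx2
      filter_upwards [this] with n hn
      exact_mod_cast hn
    -- eventually c n < m
    have hcev : ∀ᶠ n in atTop, c n < m := by
      have hlt : Filter.limsup (fun n => ((c n : ℝ) : EReal)) atTop < ((m : ℝ) : EReal) :=
        lt_of_le_of_lt hinf1 (by exact_mod_cast hℓm)
      have := Filter.eventually_lt_of_limsup_lt hlt
      filter_upwards [this] with n hn
      exact_mod_cast hn
    -- the key bound
    have key : ∀ᶠ n in atTop, 1 - M / (n * β * δ) ≤ ((Qn n) S : ℝ) := by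
      filter_upwards [hdev, hcev, Filter.eventually_ge_atTop 1] with n hdn hcn hn1
      have hnpos : (0 : ℝ) < n := by exact_mod_cast hn1
      set ν : Measure Θ := ((Qn n : ProbabilityMeasure Θ) : Measure Θ) with hνdef
      haveI : IsProbabilityMeasure ν := (Qn n).2
      obtain ⟨b, hb⟩ := hbdd n
      -- upper bound on n * J from Dirac competitors
      have hub : ∀ θ : Θ, ((n : ℝ) : EReal) * J (L n) ν ≤
          (((n : ℝ) * L n θ + 1 / β * M : ℝ) : EReal) := by
        intro θ
        have hT := hQn n (diracProb θ)
        rw [T, T] at hT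
        have hdir : J (L n) ((diracProb θ : ProbabilityMeasure Θ) : Measure Θ)
            = ((L n θ : ℝ) : EReal) := J_dirac (hmeas n) θ
        rw [hdir] at hT
        have h1 : ((n : ℝ) : EReal) * J (L n) ν ≤
            ((n : ℝ) : EReal) * J (L n) ν + ((1 / β * D (Qn n) Pr : ℝ) : EReal) := by
          apply le_add_of_nonneg_right
          exact_mod_cast mul_nonneg (by positivity) (hDnn (Qn n) Pr)
        refine h1.trans (hT.trans ?_)
        rw [← EReal.coe_mul, ← EReal.coe_add]
        apply EReal.coe_le_coe_iff.mpr
        have h2 := hDbdd (diracProb θ)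
        have h3 : 0 < 1 / β := one_div_pos.mpr hβ
        nlinarith [mul_le_mul_of_nonneg_left h2 h3.le]
      -- J is finite
      have hJne : J (L n) ν ≠ ⊤ := by
        intro htop
        have := hub (Classical.arbitrary Θ)
        rw [htop, EReal.coe_mul_top_of_pos hnpos] at this
        exact (EReal.coe_lt_top _).not_ge this
      obtain ⟨hint, hJeq⟩ := J_finite (hmeas n) hb hJne
      set I : ℝ := ∫ θ, L n θ ∂ν with hIdef
      -- real upper bound: n * I ≤ n * L n θ + M / β for all θ
      have hubr : ∀ θ : Θ, (n : ℝ) * I ≤ (n : ℝ) * L n θ + 1 / β * M := by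
        intro θ
        have := hub θ
        rw [hJeq, ← EReal.coe_mul] at this
        exact_mod_cast this
      -- hence I ≤ c n + M / (n * β)
      have hIc : (n : ℝ) * I ≤ (n : ℝ) * c n + 1 / β * M := by
        have h2 : ((n : ℝ) * I - 1 / β * M) / (n : ℝ) ≤ c n := by
          apply le_ciInf
          intro θ
          rw [div_le_iff₀ hnpos]
          have := hubr θ
          nlinarith
        rw [div_le_iff₀ hnpos] at h2
        nlinarith [h2]
      -- lower bound on I
      set q : ℝ := (ν Sᶜ).toReal with hqdef
      have hq0 : 0 ≤ q := ENNReal.toReal_nonneg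
      have hbddR : BddBelow (Set.range fun θ : (Sᶜ : Set Θ) => L n (θ : Θ)) := by
        refine ⟨b, ?_⟩
        rintro y ⟨θ, rfl⟩
        exact hb θ
      have hbddR2 : BddBelow (Set.range (L n)) := by
        refine ⟨b, ?_⟩
        rintro y ⟨θ, rfl⟩
        exact hb θ
      have hIl : c n + (d n - c n) * q ≤ I := by
        set g : Θ → ℝ := fun θ => c n + (d n - c n) * Set.indicator Sᶜ (fun _ => (1:ℝ)) θ
          with hgdef
        have hgle : ∀ θ, g θ ≤ L n θ := by
          intro θ
          by_cases hθ : θ ∈ Sᶜ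
          · have : d n ≤ L n θ := ciInf_le hbddR ⟨θ, hθ⟩
            simp only [hgdef, Set.indicator_of_mem hθ]
            linarith
          · have : c n ≤ L n θ := ciInf_le hbddR2 θ
            simp only [hgdef, Set.indicator_of_notMem hθ]
            linarith
        have hgint : Integrable g ν := by
          apply Integrable.add (integrable_const _)
          exact ((integrable_const (1:ℝ)).indicator hSmeas.compl).const_mul _
        have : ∫ θ, g θ ∂ν = c n + (d n - c n) * q := by
          rw [hgdef]
          rw [integral_add (integrable_const _)
            (((integrable_const (1:ℝ)).indicator hSmeas.compl).const_mul _)]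
          rw [integral_const_mul, integral_indicator_const _ hSmeas.compl]
          simp [hqdef, Measure.real_def]
        calc c n + (d n - c n) * q = ∫ θ, g θ ∂ν := this.symm
          _ ≤ I := integral_mono hgint hint hgle
      -- combine
      have hdc : δ ≤ d n - c n := by rw [hδdef]; linarith
      have hqle : q ≤ M / ((n : ℝ) * β * δ) := by
        have h3 : (n : ℝ) * ((d n - c n) * q) ≤ 1 / β * M := by nlinarith [hIl, hIc]
        have h4 : (n : ℝ) * (δ * q) ≤ 1 / β * M := by
          refine le_trans ?_ h3
          have := mul_le_mul_of_nonneg_right hdc hq0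
          nlinarith [this]
        rw [le_div_iff₀ (by positivity : (0:ℝ) < (n : ℝ) * β * δ)]
        have h5 : β * ((n : ℝ) * (δ * q)) ≤ β * (1 / β * M) :=
          mul_le_mul_of_nonneg_left h4 hβ.le
        have h7 : β * (1 / β * M) = M := by field_simp
        nlinarith [h5, h7]
      -- relate (Qn n) S to q
      have hQS : ((Qn n) S : ℝ) = 1 - q := by
        have h5 : ν S + ν Sᶜ = 1 := by
          rw [measure_add_measure_compl hSmeas]
          exact measure_univ
        have h6 : (ν S).toReal + (ν Sᶜ).toReal = 1 := by
          rw [← ENNReal.toReal_add (measure_ne_top ν S) (measure_ne_top ν Sᶜ), h5]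
          simp
        have h7 : ((Qn n) S : ℝ) = (ν S).toReal := by
          simp [MeasureTheory.ProbabilityMeasure.coeFn_def, ENNReal.toReal, hνdef]
        rw [h7, hqdef]
        linarith
      rw [hQS]
      linarith [hqle]
    -- squeeze
    have hub1 : ∀ᶠ n in atTop, ((Qn n) S : ℝ) ≤ 1 := by
      filter_upwards with n
      exact_mod_cast (Qn n).apply_le_one S
    have hlim : Tendsto (fun n : ℕ => 1 - M / (n * β * δ)) atTop (nhds 1) := by
      have h8 : Tendsto (fun n : ℕ => M / (n * β * δ)) atTop (nhds 0) := by
        have h9 : (fun n : ℕ => M / (n * β * δ)) = fun n : ℕ => (M / (β * δ)) * (1 / n) := by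
          funext n
          field_simp
        rw [h9]
        have := tendsto_one_div_atTop_nhds_zero_nat (𝕜 := ℝ)
        simpa using this.const_mul (M / (β * δ))
      have := h8.const_sub 1
      simpa using this
    exact tendsto_of_tendsto_of_tendsto_of_le_of_le' hlim tendsto_const_nhds key hub1
end

section
/- Let M_n > 0 and β_n > 0 vary with n, let the losses (L_n) be measurable, bounded below, lower semicontinuous and coercive with L_n → L pointwise, L lower semicontinuous, inf_Θ L ≥ limsup_n inf_Θ L_n > −∞, suppose 𝒬 allows for Dirac measures, and suppose D_n(Q,Π_n) ≤ M_n for all Q ∈ 𝒬 (the divergence and prior may also vary with n). Let Q_n minimise T_n(Q) = n·J_{L_n}(Q) + (1/β_n)·D_n(Q,Π_n) over 𝒬. (i) If M_n/(β_n·n) → 0, then Q_n(A) → 0 for every measurable A with inf_A L > inf_Θ L and liminf_n inf_A L_n > inf_Θ L. (ii) If (ε_n) is positive with ε_n → 0 and n·ε_n·β_n/M_n → ∞, and there exist k > 0 and N with inf_{N_{ε_n}^c} L_n − inf_Θ L_n ≥ k·ε_n for all n ≥ N, where N_{ε_n} := {θ : L(θ) ≤ inf_Θ L + ε_n}, then Q_n(N_{ε_n})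 → 1. -/
open MeasureTheory Filter Topology
open scoped ENNReal NNReal

section AuxLemmas
variable {Θ : Type*} [MeasurableSpace Θ]

lemma lintegral_ofReal_lt_top' {ν : Measure Θ} {f : Θ → ℝ} (hf : Integrable f ν) :
    ∫⁻ θ, ENNReal.ofReal (f θ) ∂ν < ⊤ := by
  refine lt_of_le_of_lt (lintegral_mono fun θ => ?_) ((hasFiniteIntegral_iff_norm f).1 hf.2)
  exact ENNReal.ofReal_le_ofReal (le_abs_self _)

lemma ereal_coe_ennreal_eq {a : ℝ≥0∞} (ha : a ≠ ⊤) :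
    (a : EReal) = ((a.toReal : ℝ) : EReal) := by
  conv_lhs => rw [← ENNReal.ofReal_toReal ha]
  rw [EReal.coe_ennreal_ofReal, max_eq_left ENNReal.toReal_nonneg]

lemma J_eq_integral {ν : Measure Θ} {f : Θ → ℝ} (hf : Integrable f ν) :
    J f ν = ((∫ θ, f θ ∂ν : ℝ) : EReal) := by
  have h1 : ∫⁻ θ, ENNReal.ofReal (f θ) ∂ν ≠ ⊤ := (lintegral_ofReal_lt_top' hf).ne
  have h2 : ∫⁻ θ, ENNReal.ofReal (-f θ) ∂ν ≠ ⊤ := (lintegral_ofReal_lt_top' hf.neg).ne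
  rw [J, integral_eq_lintegral_pos_part_sub_lintegral_neg_part hf, EReal.coe_sub,
    ereal_coe_ennreal_eq h1, ereal_coe_ennreal_eq h2]

lemma J_mono {ν : Measure Θ} {f g : Θ → ℝ} (h : ∀ θ, g θ ≤ f θ) : J g ν ≤ J f ν :=
  EReal.sub_le_sub
    (EReal.coe_ennreal_le_coe_ennreal_iff.2
      (lintegral_mono fun θ => ENNReal.ofReal_le_ofReal (h θ)))
    (EReal.coe_ennreal_le_coe_ennreal_iff.2
      (lintegral_mono fun θ => ENNReal.ofReal_le_ofReal (neg_le_neg (h θ))))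

lemma J_markov {ν : Measure Θ} [IsProbabilityMeasure ν] {f : Θ → ℝ} {A : Set Θ}
    (hA : MeasurableSet A) {c d : ℝ} (hd : 0 ≤ d) (hc : ∀ θ, c ≤ f θ)
    (hcd : ∀ θ ∈ A, c + d ≤ f θ) :
    ((c + d * (ν A).toReal : ℝ) : EReal) ≤ J f ν := by
  have hgint : Integrable (fun θ => c + A.indicator (fun _ => d) θ) ν :=
    (integrable_const c).add ((integrable_const d).indicator hA)
  have hgle : ∀ θ, c + A.indicator (fun _ => d) θ ≤ f θ := by
    intro θ
    by_cases hθ : θ ∈ A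
    · simpa [Set.indicator_of_mem hθ] using hcd θ hθ
    · simpa [Set.indicator_of_notMem hθ] using hc θ
  have hJg : J (fun θ => c + A.indicator (fun _ => d) θ) ν
      = ((c + d * (ν A).toReal : ℝ) : EReal) := by
    rw [J_eq_integral hgint]
    congr 1
    rw [integral_add (integrable_const c) ((integrable_const d).indicator hA),
      integral_const, integral_indicator_const d hA]
    simp [measure_univ, mul_comm, measureReal_def]
  exact hJg ▸ J_mono hgle

lemma probCoe (ν : ProbabilityMeasure Θ) (A : Set Θ) :
    ((ν A : ℝ≥0) : ℝ) = ((ν : Measure Θ) A).toReal := by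
  rw [← ProbabilityMeasure.ennreal_coeFn_eq_coeFn_toMeasure, ENNReal.coe_toReal]

lemma probCompl (ν : ProbabilityMeasure Θ) {A : Set Θ} (hA : MeasurableSet A) :
    ((ν A : ℝ≥0) : ℝ) = 1 - ((ν Aᶜ : ℝ≥0) : ℝ) := by
  have h : ((ν : Measure Θ) A).toReal + ((ν : Measure Θ) Aᶜ).toReal = 1 := by
    rw [← ENNReal.toReal_add (measure_ne_top _ _) (measure_ne_top _ _),
      measure_add_measure_compl hA, measure_univ, ENNReal.toReal_one]
  rw [probCoe, probCoe]; linarith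

end AuxLemmas

lemma key_bound {Θ : Type*} [TopologicalSpace Θ] [MeasurableSpace Θ] [OpensMeasurableSpace Θ]
    [Nonempty Θ]
    {𝒬 : Set (ProbabilityMeasure Θ)} (h𝒬 : AllowsDiracs 𝒬)
    {Ln : Θ → ℝ} (hbdd : ∃ b, ∀ θ, b ≤ Ln θ) (hlsc : LowerSemicontinuous Ln)
    (hcoer : Coercive Ln)
    {n : ℕ} (hn : 1 ≤ n) {βn Mn : ℝ} (hβ : 0 < βn) (hM : 0 < Mn)
    {Dn : ProbabilityMeasure Θ → ProbabilityMeasure Θ → ℝ}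
    (hDnn : ∀ P Q, 0 ≤ Dn P Q) {Pr : ProbabilityMeasure Θ}
    (hDbdd : ∀ Q ∈ 𝒬, Dn Q Pr ≤ Mn)
    {Qn : ProbabilityMeasure Θ} (_hQmem : Qn ∈ 𝒬)
    (hmin : ∀ Q ∈ 𝒬, T n βn Ln Dn Pr Qn ≤ T n βn Ln Dn Pr Q)
    {A : Set Θ} (hA : MeasurableSet A) {d : ℝ} (hd : 0 ≤ d)
    (hcd : ∀ θ ∈ A, (⨅ θ' : Θ, Ln θ') + d ≤ Ln θ) :
    d * ((Qn : Measure Θ) A).toReal ≤ Mn / (βn * n) := by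
  obtain ⟨b, hb⟩ := hbdd
  set c := ⨅ θ' : Θ, Ln θ' with hcdef
  have hbdd' : BddBelow (Set.range Ln) := ⟨b, by rintro _ ⟨θ, rfl⟩; exact hb θ⟩
  have hc : ∀ θ, c ≤ Ln θ := fun θ => ciInf_le hbdd' θ
  have hADeq := h𝒬.2 Ln ⟨b, hb⟩ hlsc hcoer
  have hn0 : (0:ℝ) < (n:ℝ) := by exact_mod_cast hn
  set e := Mn / (βn * n) with hedef
  have he : 0 < e := div_pos hM (mul_pos hβ hn0)
  have hup : ∀ δ : ℝ, 0 < δ → J Ln (Qn : Measure Θ) ≤ ((c + e + δ : ℝ) : EReal) := by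
    intro δ hδ
    have h1 : (⨅ ν : 𝒬, J Ln (ν.1 : Measure Θ)) < ((c + δ : ℝ) : EReal) := by
      rw [hADeq]; exact_mod_cast (by linarith : c < c + δ)
    obtain ⟨⟨Q, hQ𝒬⟩, hQlt⟩ := iInf_lt_iff.1 h1
    have step1 : ((n : ℝ) : EReal) * J Ln (Qn : Measure Θ) ≤ T n βn Ln Dn Pr Qn := by
      have h0 : (0:EReal) ≤ ((1/βn * Dn Qn Pr : ℝ) : EReal) := by
        exact_mod_cast mul_nonneg (by positivity) (hDnn _ _)
      exact le_add_of_nonneg_right h0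
    have step2 : T n βn Ln Dn Pr Q
        ≤ ((n : ℝ) : EReal) * J Ln (Q : Measure Θ) + ((Mn/βn : ℝ) : EReal) := by
      apply add_le_add_right
      have : 1/βn * Dn Q Pr ≤ Mn/βn := by
        rw [div_eq_mul_inv Mn βn, mul_comm Mn βn⁻¹, ← one_div]
        exact mul_le_mul_of_nonneg_left (hDbdd Q hQ𝒬) (by positivity)
      exact_mod_cast this
    have step3 : ((n:ℝ):EReal) * J Ln (Q : Measure Θ) ≤ ((n:ℝ):EReal) * ((c+δ:ℝ):EReal) :=
      mul_le_mul_of_nonneg_left hQlt.le (by exact_mod_cast hn0.le)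
    have chain : ((n:ℝ):EReal) * J Ln (Qn : Measure Θ)
        ≤ (((n:ℝ) * (c+δ) + Mn/βn : ℝ) : EReal) := by
      calc ((n:ℝ):EReal) * J Ln (Qn : Measure Θ)
          ≤ T n βn Ln Dn Pr Qn := step1
        _ ≤ T n βn Ln Dn Pr Q := hmin Q hQ𝒬
        _ ≤ ((n:ℝ):EReal) * J Ln (Q : Measure Θ) + ((Mn/βn : ℝ) : EReal) := step2
        _ ≤ ((n:ℝ):EReal) * ((c+δ:ℝ):EReal) + ((Mn/βn : ℝ) : EReal) :=
            add_le_add_left step3 _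
        _ = _ := by norm_cast
    have final := mul_le_mul_of_nonneg_left chain
      (show (0:EReal) ≤ ((1/(n:ℝ) : ℝ):EReal) by
        exact_mod_cast (by positivity : (0:ℝ) ≤ 1/(n:ℝ)))
    rw [← mul_assoc] at final
    have hone : ((1/(n:ℝ) : ℝ):EReal) * ((n:ℝ):EReal) = (1 : EReal) := by
      rw [← EReal.coe_mul]
      norm_num [hn0.ne']
    rw [hone, one_mul, ← EReal.coe_mul] at final
    refine le_trans final (EReal.coe_le_coe_iff.2 (le_of_eq ?_))
    rw [hedef]
    field_simp
    ring
  have hlow : ((c : ℝ) : EReal) ≤ J Ln (Qn : Measure Θ) := by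
    have := J_markov (ν := (Qn : Measure Θ)) MeasurableSet.empty le_rfl hc
      (fun θ hθ => absurd hθ (Set.notMem_empty θ))
    simpa using this
  have hne_top : J Ln (Qn : Measure Θ) ≠ ⊤ :=
    ((hup 1 one_pos).trans_lt (EReal.coe_lt_top _)).ne
  have hne_bot : J Ln (Qn : Measure Θ) ≠ ⊥ := ((EReal.bot_lt_coe _).trans_le hlow).ne'
  set r := (J Ln (Qn : Measure Θ)).toReal with hrdef
  have hr : J Ln (Qn : Measure Θ) = ((r:ℝ) : EReal) := (EReal.coe_toReal hne_top hne_bot).symm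
  have hrle : r ≤ c + e := by
    by_contra hcon
    push_neg at hcon
    have h2 := hup ((r - (c+e))/2) (by linarith)
    rw [hr] at h2
    have := EReal.coe_le_coe_iff.1 h2
    linarith
  have hmk := J_markov (ν := (Qn : Measure Θ)) hA hd hc hcd
  rw [hr] at hmk
  have := EReal.coe_le_coe_iff.1 hmk
  rw [hedef] at *
  linarith

/-- relaxation of `M` and `β`: with `M_n`, `β_n`, divergences `D_n` and priors
`Π_n` varying in `n`, (i) if `M_n/(β_n · n) → 0` then the GVI posteriors still concentrate,
and (ii) with rates `ε_n → 0` such that `n·ε_n·β_n/M_n → ∞`, under the eventual gap condition,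
`Q_n(N_{ε_n}) → 1`. -/
theorem gvi_varying_parameters {Θ : Type*} [TopologicalSpace Θ] [PolishSpace Θ]
    [MeasurableSpace Θ] [BorelSpace Θ] [Nonempty Θ]
    (𝒬 : Set (ProbabilityMeasure Θ)) (h𝒬 : AllowsDiracs 𝒬)
    (L : ℕ → Θ → ℝ) (Llim : Θ → ℝ)
    (hmeas : ∀ n, Measurable (L n)) (hbdd : ∀ n, ∃ b : ℝ, ∀ θ, b ≤ L n θ)
    (hlsc : ∀ n, LowerSemicontinuous (L n)) (hcoer : ∀ n, Coercive (L n))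
    (hLlimlsc : LowerSemicontinuous Llim)
    (hconv : ∀ θ : Θ, Tendsto (fun n => L n θ) atTop (nhds (Llim θ)))
    (hinf1 : Filter.limsup (fun n => ((⨅ θ : Θ, L n θ : ℝ) : EReal)) atTop ≤
      ((⨅ θ : Θ, Llim θ : ℝ) : EReal))
    (hinf2 : (⊥ : EReal) < Filter.limsup (fun n => ((⨅ θ : Θ, L n θ : ℝ) : EReal)) atTop)
    (M β : ℕ → ℝ) (hM : ∀ n, 0 < M n) (hβ : ∀ n, 0 < β n)
    (D : ℕ → ProbabilityMeasure Θ → ProbabilityMeasure Θ → ℝ)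
    (hDnn : ∀ n, ∀ P Q : ProbabilityMeasure Θ, 0 ≤ D n P Q)
    (Pr : ℕ → ProbabilityMeasure Θ)
    (hDbdd : ∀ n, ∀ Q ∈ 𝒬, D n Q (Pr n) ≤ M n)
    (Qn : ℕ → ProbabilityMeasure Θ)
    (hQn : ∀ n, Qn n ∈ 𝒬 ∧
      ∀ Q ∈ 𝒬, T n (β n) (L n) (D n) (Pr n) (Qn n) ≤ T n (β n) (L n) (D n) (Pr n) Q) :
    ((Tendsto (fun n : ℕ => M n / (β n * n)) atTop (nhds 0)) →
      ∀ A : Set Θ, MeasurableSet A → (⨅ θ : Θ, Llim θ) < ⨅ θ : A, Llim (θ : Θ) →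
        ((⨅ θ : Θ, Llim θ : ℝ) : EReal) <
          Filter.liminf (fun n => ((⨅ θ : A, L n (θ : Θ) : ℝ) : EReal)) atTop →
        Tendsto (fun n => ((Qn n) A : ℝ)) atTop (nhds 0)) ∧
    (∀ ε : ℕ → ℝ, (∀ n, 0 < ε n) → Tendsto ε atTop (nhds 0) →
      Tendsto (fun n : ℕ => (n : ℝ) * ε n * β n / M n) atTop atTop →
      (∃ k : ℝ, 0 < k ∧ ∃ N : ℕ, ∀ n ≥ N,
        k * ε n ≤ (⨅ θ : ({θ : Θ | Llim θ ≤ (⨅ θ' : Θ, Llim θ') + ε n}ᶜ : Set Θ), L n (θ : Θ)) -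
          ⨅ θ : Θ, L n θ) →
      Tendsto (fun n => ((Qn n) {θ : Θ | Llim θ ≤ (⨅ θ' : Θ, Llim θ') + ε n} : ℝ)) atTop
        (nhds 1)) := by
  constructor
  · -- Part (i)
    intro htend A hAmeas _hgap1 hgap2
    obtain ⟨z, hz1, hz2⟩ := exists_between hgap2
    obtain ⟨w, hw1, hw2⟩ := exists_between hz1
    have hzt : z ≠ ⊤ := (hz2.trans_le le_top).ne
    have hzb : z ≠ ⊥ := (((EReal.bot_lt_coe _).trans hw1).trans hw2).ne'
    have hwt : w ≠ ⊤ := (hw2.trans_le (le_top : z ≤ ⊤)).ne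
    have hwb : w ≠ ⊥ := ((EReal.bot_lt_coe _).trans hw1).ne'
    set t1 := w.toReal with ht1
    set t2 := z.toReal with ht2
    have hw' : (t1 : EReal) = w := EReal.coe_toReal hwt hwb
    have hz' : (t2 : EReal) = z := EReal.coe_toReal hzt hzb
    have ht12 : t1 < t2 := by
      rw [← EReal.coe_lt_coe_iff, hw', hz']; exact hw2
    rw [← hw'] at hw1
    rw [← hz'] at hz2
    have hev1 : ∀ᶠ n in atTop, (⨅ θ : Θ, L n θ) < t1 := by
      have h := eventually_lt_of_limsup_lt (hinf1.trans_lt hw1)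
      filter_upwards [h] with n hn
      exact_mod_cast hn
    have hev2 : ∀ᶠ n in atTop, (t2 : ℝ) < ⨅ θ : A, L n (θ : Θ) := by
      have h := eventually_lt_of_lt_liminf hz2
      filter_upwards [h] with n hn
      exact_mod_cast hn
    have key : ∀ᶠ n in atTop, ((Qn n) A : ℝ) ≤ (M n / (β n * n)) / (t2 - t1) := by
      filter_upwards [hev1, hev2, eventually_ge_atTop 1] with n h1 h2 hn1
      obtain ⟨b, hb⟩ := hbdd n
      have hcd : ∀ θ ∈ A, (⨅ θ' : Θ, L n θ') + (t2 - t1) ≤ L n θ := by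
        intro θ hθ
        have hA_bdd : BddBelow (Set.range fun θ : A => L n (θ : Θ)) :=
          ⟨b, by rintro _ ⟨θ', rfl⟩; exact hb θ'⟩
        have h3 := ciInf_le hA_bdd (⟨θ, hθ⟩ : A)
        simp only at h3
        linarith
      have hb2 := key_bound h𝒬 ⟨b, hb⟩ (hlsc n) (hcoer n) hn1 (hβ n) (hM n)
        (hDnn n) (hDbdd n) (hQn n).1 (hQn n).2 hAmeas
        (by linarith : (0:ℝ) ≤ t2 - t1) hcd
      rw [probCoe, le_div_iff₀ (by linarith : (0:ℝ) < t2 - t1)]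
      linarith [hb2]
    refine tendsto_of_tendsto_of_tendsto_of_le_of_le' tendsto_const_nhds
      (by simpa using htend.div_const (t2 - t1))
      (Eventually.of_forall fun n => NNReal.coe_nonneg _) key
  · -- Part (ii)
    intro ε hεpos hεto hrate hk
    obtain ⟨k, hk0, N, hkN⟩ := hk
    have hclosed : ∀ n, IsClosed {θ : Θ | Llim θ ≤ (⨅ θ' : Θ, Llim θ') + ε n} := fun n =>
      lowerSemicontinuous_iff_isClosed_preimage.1 hLlimlsc _
    have hcompl0 : Tendsto
        (fun n => ((Qn n) {θ : Θ | Llim θ ≤ (⨅ θ' : Θ, Llim θ') + ε n}ᶜ : ℝ))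
        atTop (nhds 0) := by
      have hbnd : ∀ᶠ n in atTop,
          ((Qn n) {θ : Θ | Llim θ ≤ (⨅ θ' : Θ, Llim θ') + ε n}ᶜ : ℝ)
            ≤ 1/k * (((n:ℝ) * ε n * β n / M n)⁻¹) := by
        filter_upwards [eventually_ge_atTop (max N 1)] with n hn
        have hn1 : 1 ≤ n := le_trans (le_max_right _ _) hn
        have hnN : N ≤ n := le_trans (le_max_left _ _) hn
        obtain ⟨b, hb⟩ := hbdd n
        have h1 := hkN n hnN
        set S := {θ : Θ | Llim θ ≤ (⨅ θ' : Θ, Llim θ') + ε n} with hS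
        have hcd : ∀ θ ∈ Sᶜ, (⨅ θ' : Θ, L n θ') + k * ε n ≤ L n θ := by
          intro θ hθ
          have hbddS : BddBelow (Set.range fun θ : (Sᶜ : Set Θ) => L n (θ : Θ)) :=
            ⟨b, by rintro _ ⟨θ', rfl⟩; exact hb θ'⟩
          have h2 := ciInf_le hbddS (⟨θ, hθ⟩ : (Sᶜ : Set Θ))
          simp only at h2
          linarith
        have hb2 := key_bound h𝒬 ⟨b, hb⟩ (hlsc n) (hcoer n) hn1 (hβ n) (hM n)
          (hDnn n) (hDbdd n) (hQn n).1 (hQn n).2 ((hclosed n).measurableSet.compl)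
          (le_of_lt (mul_pos hk0 (hεpos n))) hcd
        rw [probCoe]
        have hn0 : (0:ℝ) < (n:ℝ) := by exact_mod_cast hn1
        have h3 : ((Qn n : Measure Θ) Sᶜ).toReal ≤ M n / (β n * n) / (k * ε n) :=
          (le_div_iff₀ (mul_pos hk0 (hεpos n))).2 (by linarith [hb2])
        refine h3.trans (le_of_eq ?_)
        rw [inv_div]
        have hM' := (hM n).ne'
        have hβ' := (hβ n).ne'
        have hε' := (hεpos n).ne'
        have hk' := hk0.ne'
        rw [div_div, one_div, inv_mul_eq_div, div_div]
        congr 1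
        ring
      have htend0 : Tendsto (fun n : ℕ => 1/k * (((n:ℝ) * ε n * β n / M n)⁻¹)) atTop (nhds 0) := by
        have := hrate.inv_tendsto_atTop
        simpa using this.const_mul (1/k)
      refine tendsto_of_tendsto_of_tendsto_of_le_of_le' tendsto_const_nhds htend0
        (Eventually.of_forall fun n => NNReal.coe_nonneg _) hbnd
    have heq : ∀ n, ((Qn n) {θ : Θ | Llim θ ≤ (⨅ θ' : Θ, Llim θ') + ε n} : ℝ)
        = 1 - ((Qn n) {θ : Θ | Llim θ ≤ (⨅ θ' : Θ, Llim θ') + ε n}ᶜ : ℝ) :=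
      fun n => probCompl _ (hclosed n).measurableSet
    rw [tendsto_congr heq]
    have h1 : Tendsto
        (fun n : ℕ => 1 - ((Qn n) {θ : Θ | Llim θ ≤ (⨅ θ' : Θ, Llim θ') + ε n}ᶜ : ℝ))
        atTop (nhds (1 - 0)) := Tendsto.sub tendsto_const_nhds hcompl0
    simpa using h1
end
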